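/- Let R = (Σ, I, T) be a regular transition system and let w, z be configurations. Let τ_w and τ_z be fragment separation refinements for w and z respectively, such that the first-appearance list of outgoing states of τ_w equals the first-appearance list of incoming states of τ_z. Then there exists a fragment separation refinement τ_{wz} for the concatenation w·z such that: at every position, the set of used source letters of the column of τ_{wz} equals the set of used source letters of the corresponding column of τ_w or τ_z; the first-appearance list of incoming states of τ_{wz} equals that of τ_w; and the first-appearance list of outgoing states of τ_{wz} equals that of τ_z. -/

import Mathlib

/-- A regular transition system: an NFA `I` over `Σ` for the initial
configurations and a transducer (an NFA over `Σ × Σ`) `T` for the transitions. -/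
structure RTS (Sig QI QT : Type) where
  I : NFA Sig QI
  T : NFA (Sig × Sig) QT

/-- A row: a transition `(q, (a,b), q')` of the transducer. -/
abbrev Row (Sig QT : Type) := QT × (Sig × Sig) × QT

/-- A column: a finite sequence of rows. -/
abbrev Column (Sig QT : Type) := List (Row Sig QT)

/-- A local separation refinement for a letter `c`: a sequence of transitions
`(q_i, (a_i, b_i), q_i')` of the transducer such that for every `i`, either
`b_i = c` or `b_i = a_{i'}` for some `i' < i`. -/
def IsLSR {Sig QT : Type} (T : NFA (Sig × Sig) QT) (c : Sig)
    (col : Column Sig QT) : Prop :=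
  (∀ r ∈ col, r.2.2 ∈ T.step r.1 r.2.1) ∧
  ∀ (i : ℕ) (h : i < col.length),
    (col.get ⟨i, h⟩).2.1.2 = c ∨
      ∃ (i' : ℕ) (h' : i' < col.length), i' < i ∧
        (col.get ⟨i, h⟩).2.1.2 = (col.get ⟨i', h'⟩).2.1.1

/-- The set of used source letters of a column. -/
def usedLetters {Sig QT : Type} (col : Column Sig QT) : Set Sig :=
  { a | ∃ r ∈ col, r.2.1.1 = a }

/-- The sequence of incoming states of a column. -/
def incoming {Sig QT : Type} (col : Column Sig QT) : List QT :=
  col.map (fun r => r.1)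

/-- The sequence of outgoing states of a column. -/
def outgoing {Sig QT : Type} (col : Column Sig QT) : List QT :=
  col.map (fun r => r.2.2)

/-- The first-appearance list of a sequence of states: keep only the first
occurrence of each state. -/
def firstAppear {QT : Type} [DecidableEq QT] : List QT → List QT
  | [] => []
  | a :: l => a :: (firstAppear l).filter (· ≠ a)

/-- A fragment separation refinement for a word `w`: a table with `|w|` columns,
the `j`-th column being a local separation refinement for `w[j]`, all columns of
the same length, and the outgoing states of each column equal (position-wise) to
the incoming states of the next column. -/
def IsFSR {Sig QI QT : Type} (R : RTS Sig QI QT) (w : List Sig)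
    (F : List (Column Sig QT)) : Prop :=
  F.length = w.length ∧
  (∀ (j : ℕ) (h : j < F.length) (hw : j < w.length),
    IsLSR R.T (w.get ⟨j, hw⟩) (F.get ⟨j, h⟩)) ∧
  (∀ c ∈ F, ∀ c' ∈ F, c.length = c'.length) ∧
  (∀ (j : ℕ) (h : j + 1 < F.length),
    outgoing (F.get ⟨j, Nat.lt_of_succ_lt h⟩) = incoming (F.get ⟨j + 1, h⟩))

/-- The incoming states of a fragment separation refinement (those of its first
column). -/
def fIncoming {Sig QT : Type} (F : List (Column Sig QT)) : List QT :=
  incoming (F.headD [])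

/-- The outgoing states of a fragment separation refinement (those of its last
column). -/
def fOutgoing {Sig QT : Type} (F : List (Column Sig QT)) : List QT :=
  outgoing (F.getLast?.getD [])

section Lists
variable {α : Type} [DecidableEq α]

/-- select entries of `L` according to index list `σ`. -/
def selL {β : Type} (σ : List ℕ) (L : List β) : List β := σ.filterMap (fun i => L[i]?)

inductive GoodAux (n : ℕ) : ℕ → List ℕ → Prop
  | nil : GoodAux n n []
  | fresh {k σ} : GoodAux n (k+1) σ → GoodAux n k (k :: σ)
  | old {k j σ} : j < k → GoodAux n k σ → GoodAux n k (j :: σ)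

lemma GoodAux.le {n k σ} (h : GoodAux n k σ) : k ≤ n := by
  induction h with
  | nil => exact le_rfl
  | fresh _ ih => omega
  | old _ _ ih => exact ih

lemma GoodAux.mem_lt {n k σ} (h : GoodAux n k σ) : ∀ i ∈ σ, i < n := by
  induction h with
  | nil => simp
  | fresh h ih =>
    intro i hi
    rcases List.mem_cons.1 hi with rfl | hi
    · have := h.le; omega
    · exact ih i hi
  | old hj h ih =>
    intro i hi
    rcases List.mem_cons.1 hi with rfl | hi
    · have := h.le; omega
    · exact ih i hi

lemma GoodAux.surj {n k σ} (h : GoodAux n k σ) : ∀ j, k ≤ j → j < n → j ∈ σ := by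
  induction h with
  | nil => intro j h1 h2; omega
  | fresh h ih =>
    intro j h1 h2
    rcases eq_or_lt_of_le h1 with rfl | h1
    · exact List.mem_cons_self
    · exact List.mem_cons_of_mem _ (ih j h1 h2)
  | old hj h ih =>
    intro j h1 h2
    exact List.mem_cons_of_mem _ (ih j h1 h2)

lemma GoodAux.earlier {n k σ} (h : GoodAux n k σ) :
    ∀ (p : ℕ) (hp : p < σ.length) (j : ℕ), k ≤ j → j < σ.get ⟨p, hp⟩ →
      ∃ (p' : ℕ) (hp' : p' < σ.length), p' < p ∧ σ.get ⟨p', hp'⟩ = j := by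
  induction h with
  | nil => intro p hp; simp at hp
  | @fresh k σ h ih =>
    intro p hp j h1 h2
    match p with
    | 0 => simp at h2; omega
    | q+1 =>
      rcases eq_or_lt_of_le h1 with rfl | h1
      · exact ⟨0, by simp, Nat.succ_pos _, rfl⟩
      · obtain ⟨q', hq', hlt, heq⟩ := ih q (by simpa using hp) j h1 (by simpa using h2)
        exact ⟨q'+1, by simpa using hq', by omega, heq⟩
  | @old k j0 σ hj h ih =>
    intro p hp j h1 h2
    match p with
    | 0 => simp at h2; omega
    | q+1 =>
      obtain ⟨q', hq', hlt, heq⟩ := ih q (by simpa using hp) j h1 (by simpa using h2)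
      exact ⟨q'+1, by simpa using hq', by omega, heq⟩

lemma selL_nil {β : Type} (L : List β) : selL [] L = [] := rfl

lemma selL_cons {β : Type} (i : ℕ) (σ : List ℕ) (L : List β) (hi : i < L.length) :
    selL (i :: σ) L = L[i] :: selL σ L := by
  simp [selL, List.filterMap_cons, List.getElem?_eq_getElem hi]

lemma selL_length {β : Type} (σ : List ℕ) (L : List β) (h : ∀ i ∈ σ, i < L.length) :
    (selL σ L).length = σ.length := by
  induction σ with
  | nil => rfl
  | cons i σ ih =>
    rw [selL_cons i σ L (h i (List.mem_cons_self))]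
    simp [ih fun i hi => h i (List.mem_cons_of_mem _ hi)]

lemma selL_get? {β : Type} (σ : List ℕ) (L : List β) (h : ∀ i ∈ σ, i < L.length)
    (p : ℕ) : (selL σ L)[p]? = (σ[p]?).bind (fun i => L[i]?) := by
  induction σ generalizing p with
  | nil => simp [selL]
  | cons i σ ih =>
    rw [selL_cons i σ L (h i (List.mem_cons_self))]
    match p with
    | 0 => simp [List.getElem?_eq_getElem (h i (List.mem_cons_self))]
    | q+1 => simpa using ih (fun i hi => h i (List.mem_cons_of_mem _ hi)) q

lemma selL_map {β γ : Type} (σ : List ℕ) (L : List β) (f : β → γ) :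
    selL σ (L.map f) = (selL σ L).map f := by
  induction σ with
  | nil => rfl
  | cons i σ ih =>
    simp only [selL, List.filterMap_cons] at *
    cases hh : L[i]? with
    | none => simp [List.getElem?_map, hh, ← ih]
    | some b => simp [List.getElem?_map, hh, ← ih]

lemma mem_selL {β : Type} {σ : List ℕ} {L : List β} {b : β} :
    b ∈ selL σ L ↔ ∃ i ∈ σ, L[i]? = some b := by
  simp [selL, List.mem_filterMap]

end Lists

section FA
variable {α : Type} [DecidableEq α]

lemma mem_firstAppear {a : α} {l : List α} : a ∈ firstAppear l ↔ a ∈ l := by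
  induction l with
  | nil => simp [firstAppear]
  | cons b l ih =>
    simp only [firstAppear, List.mem_cons, List.mem_filter]
    constructor
    · rintro (rfl | ⟨h, _⟩)
      · exact Or.inl rfl
      · exact Or.inr (ih.1 h)
    · rintro (rfl | h)
      · exact Or.inl rfl
      · by_cases hab : a = b
        · exact Or.inl hab
        · exact Or.inr ⟨ih.2 h, by simpa using hab⟩

lemma fa_cons_filter (a : α) (X S : List α) :
    (firstAppear (a :: X)).filter (fun x => decide (x ∉ S)) =
      (if a ∈ S then [] else [a]) ++
        (firstAppear X).filter (fun x => decide (x ∉ (S ++ [a]))) := by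
  have hcongr : ∀ x ∈ firstAppear X,
      (decide (x ∉ S) && decide (x ≠ a)) = decide (x ∉ (S ++ [a])) := by
    intro x _
    by_cases h1 : x ∈ S <;> by_cases h2 : x = a <;> simp [h1, h2]
  simp only [firstAppear, List.filter_cons]
  rw [List.filter_filter, List.filter_congr hcongr]
  by_cases ha : a ∈ S <;> simp [ha]

lemma filter_not_mem_nil (l : List α) :
    l.filter (fun x => decide (x ∉ ([] : List α))) = l := by
  simp

lemma fa_selL_aux {n : ℕ} {σ : List ℕ} {k : ℕ} (h : GoodAux n k σ) (L : List α)
    (hL : L.length = n) :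
    (firstAppear (selL σ L)).filter (fun x => decide (x ∉ L.take k)) =
      (firstAppear (L.drop k)).filter (fun x => decide (x ∉ L.take k)) := by
  induction h with
  | nil => rw [selL_nil, ← hL, List.drop_length]
  | @fresh k σ h ih =>
    have hk : k < L.length := by have := h.le; omega
    rw [selL_cons k σ L hk, ← List.getElem_cons_drop hk,
      fa_cons_filter, fa_cons_filter]
    simp only [List.take_concat_get']
    rw [ih]
  | @old k j σ hj h ih =>
    have hjL : j < L.length := by have := h.le; omega
    have hmem : L[j] ∈ L.take k := by
      rw [List.mem_take_iff_getElem]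
      exact ⟨j, by omega, by simp⟩
    have hpred : ∀ x ∈ firstAppear (selL σ L),
        (decide (x ∉ (L.take k ++ [L[j]]))) = decide (x ∉ L.take k) := by
      intro x _
      rcases eq_or_ne x L[j] with rfl | h2
      · simp [hmem]
      · simp [h2]
    rw [selL_cons j σ L hjL, fa_cons_filter, if_pos hmem, List.nil_append,
      List.filter_congr hpred, ih]

lemma fa_selL {n : ℕ} {σ : List ℕ} (h : GoodAux n 0 σ) (L : List α)
    (hL : L.length = n) : firstAppear (selL σ L) = firstAppear L := by
  have := fa_selL_aux h L hL
  simpa using this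

end FA

section Exists
variable {α : Type} [DecidableEq α]

lemma fa_nil : firstAppear ([] : List α) = [] := rfl

lemma mem_take_idx {L : List α} {k : ℕ} {x : α} (h : x ∈ L.take k) :
    ∃ j, ∃ _ : j < L.length, j < k ∧ L[j] = x := by
  rw [List.mem_take_iff_getElem] at h
  obtain ⟨j, hj, he⟩ := h
  exact ⟨j, by omega, by omega, he⟩

lemma exists_good_pair_aux : ∀ (m : ℕ) (A B : List α) (k l : ℕ),
    k ≤ A.length → l ≤ B.length → (A.length - k) + (B.length - l) ≤ m →
    (∀ x, x ∈ A.take k ↔ x ∈ B.take l) →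
    (firstAppear (A.drop k)).filter (fun x => decide (x ∉ A.take k)) =
      (firstAppear (B.drop l)).filter (fun x => decide (x ∉ B.take l)) →
    ∃ σ τ, GoodAux A.length k σ ∧ GoodAux B.length l τ ∧ selL σ A = selL τ B := by
  intro m
  induction m with
  | zero =>
    intro A B k l hk hl hm hiff hfa
    have hke : k = A.length := by omega
    have hle : l = B.length := by omega
    exact ⟨[], [], by rw [hke]; exact GoodAux.nil, by rw [hle]; exact GoodAux.nil, rfl⟩
  | succ m ih =>
    intro A B k l hk hl hm hiff hfa
    rcases Nat.eq_or_lt_of_le hk with hke | hk'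
    · rcases Nat.eq_or_lt_of_le hl with hle | hl'
      · exact ⟨[], [], by rw [hke]; exact GoodAux.nil, by rw [hle]; exact GoodAux.nil, rfl⟩
      · -- A exhausted, B not
        have hdropA : A.drop k = [] := by rw [hke, List.drop_length]
        have hdB : B.drop l = B[l] :: B.drop (l+1) := (List.getElem_cons_drop hl').symm
        rw [hdropA, hdB, fa_cons_filter, fa_nil, List.filter_nil] at hfa
        by_cases hmem : B[l] ∈ B.take l
        · rw [if_pos hmem, List.nil_append] at hfa
          have hmemA : B[l] ∈ A.take k := (hiff _).2 hmem
          obtain ⟨j, hjA, hjk, hjval⟩ := mem_take_idx hmemA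
          have hiff' : ∀ x, x ∈ A.take k ↔ x ∈ B.take (l+1) := by
            intro x
            rw [← List.take_concat_get' B l hl', List.mem_append, List.mem_singleton]
            constructor
            · exact fun h => Or.inl ((hiff x).1 h)
            · rintro (h | rfl)
              · exact (hiff x).2 h
              · exact hmemA
          have hfa' : (firstAppear (A.drop k)).filter (fun x => decide (x ∉ A.take k)) =
              (firstAppear (B.drop (l+1))).filter (fun x => decide (x ∉ B.take (l+1))) := by
            rw [hdropA, fa_nil, List.filter_nil]
            simp only [← List.take_concat_get' B l hl']
            exact hfa
          obtain ⟨σ, τ, hσ, hτ, hsel⟩ := ih A B k (l+1) hk (by omega) (by omega) hiff' hfa'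
          refine ⟨j :: σ, l :: τ, GoodAux.old hjk hσ, GoodAux.fresh hτ, ?_⟩
          rw [selL_cons j σ A hjA, selL_cons l τ B hl', hjval, hsel]
        · rw [if_neg hmem] at hfa
          simp at hfa
    · rcases Nat.eq_or_lt_of_le hl with hle | hl'
      · -- B exhausted, A not
        have hdropB : B.drop l = [] := by rw [hle, List.drop_length]
        have hdA : A.drop k = A[k] :: A.drop (k+1) := (List.getElem_cons_drop hk').symm
        rw [hdropB, hdA, fa_cons_filter, fa_nil, List.filter_nil] at hfa
        by_cases hmem : A[k] ∈ A.take k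
        · rw [if_pos hmem, List.nil_append] at hfa
          have hmemB : A[k] ∈ B.take l := (hiff _).1 hmem
          obtain ⟨j, hjB, hjl, hjval⟩ := mem_take_idx hmemB
          have hiff' : ∀ x, x ∈ A.take (k+1) ↔ x ∈ B.take l := by
            intro x
            rw [← List.take_concat_get' A k hk', List.mem_append, List.mem_singleton]
            constructor
            · rintro (h | rfl)
              · exact (hiff x).1 h
              · exact hmemB
            · exact fun h => Or.inl ((hiff x).2 h)
          have hfa' : (firstAppear (A.drop (k+1))).filter (fun x => decide (x ∉ A.take (k+1))) =
              (firstAppear (B.drop l)).filter (fun x => decide (x ∉ B.take l)) := by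
            rw [hdropB, fa_nil, List.filter_nil]
            simp only [← List.take_concat_get' A k hk']
            exact hfa
          obtain ⟨σ, τ, hσ, hτ, hsel⟩ := ih A B (k+1) l (by omega) hl (by omega) hiff' hfa'
          refine ⟨k :: σ, j :: τ, GoodAux.fresh hσ, GoodAux.old hjl hτ, ?_⟩
          rw [selL_cons k σ A hk', selL_cons j τ B hjB, hjval, hsel]
        · rw [if_neg hmem] at hfa
          simp at hfa
      · -- both nonempty
        have hdA : A.drop k = A[k] :: A.drop (k+1) := (List.getElem_cons_drop hk').symm
        have hdB : B.drop l = B[l] :: B.drop (l+1) := (List.getElem_cons_drop hl').symm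
        by_cases hak : A[k] ∈ A.take k
        · -- advance k only
          have hmemB : A[k] ∈ B.take l := (hiff _).1 hak
          obtain ⟨j, hjB, hjl, hjval⟩ := mem_take_idx hmemB
          have hiff' : ∀ x, x ∈ A.take (k+1) ↔ x ∈ B.take l := by
            intro x
            rw [← List.take_concat_get' A k hk', List.mem_append, List.mem_singleton]
            constructor
            · rintro (h | rfl)
              · exact (hiff x).1 h
              · exact hmemB
            · exact fun h => Or.inl ((hiff x).2 h)
          have hfa' : (firstAppear (A.drop (k+1))).filter (fun x => decide (x ∉ A.take (k+1))) =
              (firstAppear (B.drop l)).filter (fun x => decide (x ∉ B.take l)) := by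
            rw [hdA, fa_cons_filter, if_pos hak, List.nil_append] at hfa
            simp only [← List.take_concat_get' A k hk']
            exact hfa
          obtain ⟨σ, τ, hσ, hτ, hsel⟩ := ih A B (k+1) l (by omega) hl (by omega) hiff' hfa'
          refine ⟨k :: σ, j :: τ, GoodAux.fresh hσ, GoodAux.old hjl hτ, ?_⟩
          rw [selL_cons k σ A hk', selL_cons j τ B hjB, hjval, hsel]
        · by_cases hbl : B[l] ∈ B.take l
          · -- advance l only
            have hmemA : B[l] ∈ A.take k := (hiff _).2 hbl
            obtain ⟨j, hjA, hjk, hjval⟩ := mem_take_idx hmemA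
            have hiff' : ∀ x, x ∈ A.take k ↔ x ∈ B.take (l+1) := by
              intro x
              rw [← List.take_concat_get' B l hl', List.mem_append, List.mem_singleton]
              constructor
              · exact fun h => Or.inl ((hiff x).1 h)
              · rintro (h | rfl)
                · exact (hiff x).2 h
                · exact hmemA
            have hfa' : (firstAppear (A.drop k)).filter (fun x => decide (x ∉ A.take k)) =
                (firstAppear (B.drop (l+1))).filter (fun x => decide (x ∉ B.take (l+1))) := by
              rw [hdB, fa_cons_filter, if_pos hbl, List.nil_append] at hfa
              simp only [← List.take_concat_get' B l hl']
              exact hfa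
            obtain ⟨σ, τ, hσ, hτ, hsel⟩ := ih A B k (l+1) hk (by omega) (by omega) hiff' hfa'
            refine ⟨j :: σ, l :: τ, GoodAux.old hjk hσ, GoodAux.fresh hτ, ?_⟩
            rw [selL_cons j σ A hjA, selL_cons l τ B hl', hjval, hsel]
          · -- both fresh
            rw [hdA, hdB, fa_cons_filter, fa_cons_filter, if_neg hak, if_neg hbl] at hfa
            simp only [List.singleton_append, List.cons_append, List.nil_append] at hfa
            have heq : A[k] = B[l] := by
              have := congrArg (fun t => t.head?) hfa
              simpa using this
            have htail : (firstAppear (A.drop (k+1))).filter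
                  (fun x => decide (x ∉ (A.take k ++ [A[k]]))) =
                (firstAppear (B.drop (l+1))).filter
                  (fun x => decide (x ∉ (B.take l ++ [B[l]]))) := by
              have := congrArg (fun t => t.tail) hfa
              simpa using this
            have hiff' : ∀ x, x ∈ A.take (k+1) ↔ x ∈ B.take (l+1) := by
              intro x
              rw [← List.take_concat_get' A k hk', ← List.take_concat_get' B l hl']
              simp only [List.mem_append, List.mem_singleton, heq, hiff x]
            have hfa' : (firstAppear (A.drop (k+1))).filter
                  (fun x => decide (x ∉ A.take (k+1))) =
                (firstAppear (B.drop (l+1))).filter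
                  (fun x => decide (x ∉ B.take (l+1))) := by
              simpa only [List.take_concat_get'] using htail
            obtain ⟨σ, τ, hσ, hτ, hsel⟩ :=
              ih A B (k+1) (l+1) (by omega) (by omega) (by omega) hiff' hfa'
            refine ⟨k :: σ, l :: τ, GoodAux.fresh hσ, GoodAux.fresh hτ, ?_⟩
            rw [selL_cons k σ A hk', selL_cons l τ B hl', heq, hsel]

lemma exists_good_pair (A B : List α) (hfa : firstAppear A = firstAppear B) :
    ∃ σ τ, GoodAux A.length 0 σ ∧ GoodAux B.length 0 τ ∧ selL σ A = selL τ B := by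
  refine exists_good_pair_aux (A.length + B.length) A B 0 0 (by omega) (by omega)
    (by omega) (by simp) ?_
  simpa using hfa

end Exists

section Tables
variable {Sig QI QT : Type}

lemma isLSR_selL {T : NFA (Sig × Sig) QT} {c : Sig} {col : Column Sig QT}
    {σ : List ℕ} (hc : IsLSR T c col) (hσ : GoodAux col.length 0 σ) :
    IsLSR T c (selL σ col) := by
  have hb : ∀ i ∈ σ, i < col.length := hσ.mem_lt
  constructor
  · intro r hr
    obtain ⟨i, _, hi⟩ := mem_selL.1 hr
    exact hc.1 r (List.mem_of_getElem? hi)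
  · intro p hp
    have hplen : p < σ.length := by rwa [selL_length σ col hb] at hp
    have hgetp : (selL σ col).get ⟨p, hp⟩ = col.get ⟨σ.get ⟨p, hplen⟩, hb _ (σ.get_mem ..)⟩ := by
      have h1 := selL_get? σ col hb p
      rw [List.getElem?_eq_getElem hp, List.getElem?_eq_getElem hplen] at h1
      simp only [Option.bind_some] at h1
      rw [List.getElem?_eq_getElem (hb _ (List.getElem_mem hplen))] at h1
      exact Option.some.inj h1
    set i := σ.get ⟨p, hplen⟩ with hi
    have hicol : i < col.length := hb _ (σ.get_mem ..)
    rcases hc.2 i hicol with h | ⟨i', hi', hlt, hval⟩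
    · left; rw [hgetp]; exact h
    · right
      obtain ⟨p', hp', hplt, hpeq⟩ := hσ.earlier p hplen i' (Nat.zero_le _) (by omega)
      have hp'sel : p' < (selL σ col).length := by rwa [selL_length σ col hb]
      refine ⟨p', hp'sel, hplt, ?_⟩
      have hgetp' : (selL σ col).get ⟨p', hp'sel⟩ =
          col.get ⟨σ.get ⟨p', hp'⟩, hb _ (σ.get_mem ..)⟩ := by
        have h1 := selL_get? σ col hb p'
        rw [List.getElem?_eq_getElem hp'sel, List.getElem?_eq_getElem hp'] at h1
        simp only [Option.bind_some] at h1
        rw [List.getElem?_eq_getElem (hb _ (List.getElem_mem hp'))] at h1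
        exact Option.some.inj h1
      have hfin : (⟨σ.get ⟨p', hp'⟩, hb _ (σ.get_mem ..)⟩ : Fin col.length) = ⟨i', hi'⟩ :=
        Fin.ext hpeq
      rw [hgetp, hgetp', hfin]
      exact hval

lemma usedLetters_selL {col : Column Sig QT} {σ : List ℕ}
    (hσ : GoodAux col.length 0 σ) : usedLetters (selL σ col) = usedLetters col := by
  have hb : ∀ i ∈ σ, i < col.length := hσ.mem_lt
  ext a
  simp only [usedLetters, Set.mem_setOf_eq]
  constructor
  · rintro ⟨r, hr, rfl⟩
    obtain ⟨i, _, hi⟩ := mem_selL.1 hr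
    exact ⟨r, List.mem_of_getElem? hi, rfl⟩
  · rintro ⟨r, hr, rfl⟩
    obtain ⟨i, hi, hival⟩ := List.mem_iff_getElem.1 hr
    refine ⟨r, mem_selL.2 ⟨i, hσ.surj i (Nat.zero_le _) hi, ?_⟩, rfl⟩
    rw [List.getElem?_eq_getElem hi, hival]

end Tables

section Main
variable {Sig QI QT : Type}


lemma getElem_congr_idx' {β : Type} (l : List β) {i j : ℕ} (h : i = j) (hi : i < l.length) :
    l[i]'hi = l[j]'(h ▸ hi) := by subst h; rfl

lemma headD_nil_eq {β : Type} (l : List (List β)) (h : 0 < l.length) :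
    l.headD [] = l[0] := by
  cases l with
  | nil => simp at h
  | cons a t => rfl

lemma getLastD_nil_eq {β : Type} (l : List (List β)) (h : 0 < l.length) :
    l.getLast?.getD [] = l[l.length - 1] := by
  have hne : l ≠ [] := List.ne_nil_of_length_pos h
  rw [List.getLast?_eq_getLast hne, Option.getD_some, List.getLast_eq_getElem]

lemma outgoing_selL (σ : List ℕ) (col : Column Sig QT) :
    outgoing (selL σ col) = selL σ (outgoing col) := (selL_map σ col _).symm

lemma incoming_selL (σ : List ℕ) (col : Column Sig QT) :
    incoming (selL σ col) = selL σ (incoming col) := (selL_map σ col _).symm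

theorem fsr_concat'
    {Sig QI QT : Type} [Fintype Sig] [Fintype QI] [Fintype QT] [DecidableEq QT]
    (R : RTS Sig QI QT) (w z : List Sig)
    (τw τz : List (Column Sig QT))
    (hw : IsFSR R w τw) (hz : IsFSR R z τz)
    (h : firstAppear (fOutgoing τw) = firstAppear (fIncoming τz)) :
    ∃ τwz : List (Column Sig QT),
      IsFSR R (w ++ z) τwz ∧
      (∀ (j : ℕ) (h₁ : j < τw.length) (h₂ : j < τwz.length),
        usedLetters (τwz.get ⟨j, h₂⟩) = usedLetters (τw.get ⟨j, h₁⟩)) ∧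
      (∀ (j : ℕ) (h₁ : j < τz.length) (h₂ : τw.length + j < τwz.length),
        usedLetters (τwz.get ⟨τw.length + j, h₂⟩) = usedLetters (τz.get ⟨j, h₁⟩)) ∧
      firstAppear (fIncoming τwz) = firstAppear (fIncoming τw) ∧
      firstAppear (fOutgoing τwz) = firstAppear (fOutgoing τz) := by
  obtain ⟨hw1, hw2, hw3, hw4⟩ := hw
  obtain ⟨hz1, hz2, hz3, hz4⟩ := hz
  rcases Nat.eq_zero_or_pos τw.length with hw0 | hwpos
  · -- τw empty
    have hτw : τw = [] := List.length_eq_zero_iff.1 hw0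
    have hwnil : w = [] := List.length_eq_zero_iff.1 (by omega)
    subst hτw hwnil
    refine ⟨τz, by simpa using ⟨hz1, hz2, hz3, hz4⟩, by simp, ?_, ?_, rfl⟩
    · intro j h₁ h₂
      simp
    · have h' : firstAppear (fIncoming τz) = [] := by
        rw [← h]; rfl
      rw [h']; rfl
  rcases Nat.eq_zero_or_pos τz.length with hz0 | hzpos
  · -- τz empty
    have hτz : τz = [] := List.length_eq_zero_iff.1 hz0
    have hznil : z = [] := List.length_eq_zero_iff.1 (by omega)
    subst hτz hznil
    refine ⟨τw, by simpa using ⟨hw1, hw2, hw3, hw4⟩, ?_, by simp, rfl, ?_⟩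
    · intro j h₁ h₂; rfl
    · have h' : firstAppear (fOutgoing τw) = [] := by
        rw [h]; rfl
      rw [h']; rfl
  -- both nonempty
  set A := fOutgoing τw with hA
  set B := fIncoming τz with hB
  have hAeq : A = outgoing τw[τw.length - 1] := by
    rw [hA]; unfold fOutgoing
    rw [getLastD_nil_eq τw hwpos]
  have hBeq : B = incoming τz[0] := by
    rw [hB]; unfold fIncoming
    rw [headD_nil_eq τz hzpos]
  have hcolw : ∀ col ∈ τw, col.length = A.length := by
    intro col hcol
    rw [hAeq]
    have := hw3 col hcol τw[τw.length - 1] (List.getElem_mem _)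
    simpa [outgoing] using this
  have hcolz : ∀ col ∈ τz, col.length = B.length := by
    intro col hcol
    rw [hBeq]
    have := hz3 col hcol τz[0] (List.getElem_mem _)
    simpa [incoming] using this
  obtain ⟨σ, τ, hσ, hτ, hsel⟩ := exists_good_pair A B h
  have hσb : ∀ i ∈ σ, i < A.length := hσ.mem_lt
  have hτb : ∀ i ∈ τ, i < B.length := hτ.mem_lt
  have hστ : σ.length = τ.length := by
    have h1 : (selL σ A).length = σ.length := selL_length σ A hσb
    have h2 : (selL τ B).length = τ.length := selL_length τ B hτb
    rw [← h1, ← h2, hsel]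
  have hgw : ∀ col ∈ τw, GoodAux col.length 0 σ := by
    intro col hcol; rw [hcolw col hcol]; exact hσ
  have hgz : ∀ col ∈ τz, GoodAux col.length 0 τ := by
    intro col hcol; rw [hcolz col hcol]; exact hτ
  have hlenw : ∀ col ∈ τw, (selL σ col).length = σ.length := by
    intro col hcol
    exact selL_length σ col (fun i hi => by rw [hcolw col hcol]; exact hσb i hi)
  have hlenz : ∀ col ∈ τz, (selL τ col).length = τ.length := by
    intro col hcol
    exact selL_length τ col (fun i hi => by rw [hcolz col hcol]; exact hτb i hi)
  refine ⟨τw.map (selL σ) ++ τz.map (selL τ), ⟨?_, ?_, ?_, ?_⟩, ?_, ?_, ?_, ?_⟩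
  · simp [hw1, hz1]
  · -- LSR columns
    intro j hj hwz
    simp only [List.get_eq_getElem]
    rcases Nat.lt_or_ge j τw.length with hjw | hjw
    · have e1 : (τw.map (selL σ) ++ τz.map (selL τ))[j] = selL σ τw[j] := by
        rw [List.getElem_append_left (by simpa using hjw), List.getElem_map]
      have e2 : (w ++ z)[j] = w[j] := List.getElem_append_left (by omega)
      rw [e1, e2]
      exact isLSR_selL (by simpa using hw2 j hjw (by omega)) (hgw _ (List.getElem_mem _))
    · have hj' : j - τw.length < τz.length := by
        simp only [List.length_append, List.length_map] at hj; omega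
      have e1 : (τw.map (selL σ) ++ τz.map (selL τ))[j] = selL τ τz[j - τw.length] := by
        rw [List.getElem_append_right (by simpa using hjw)]
        simp
      have e2 : (w ++ z)[j]'(hwz) = z[j - τw.length]'(by omega) := by
        rw [List.getElem_append_right (by omega)]
        congr 1
        omega
      rw [e1, e2]
      exact isLSR_selL (by simpa using hz2 (j - τw.length) hj' (by omega))
        (hgz _ (List.getElem_mem _))
  · -- equal lengths
    have key : ∀ c ∈ τw.map (selL σ) ++ τz.map (selL τ), c.length = σ.length := by
      intro c hc
      rcases List.mem_append.1 hc with hc | hc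
      · obtain ⟨col, hcol, rfl⟩ := List.mem_map.1 hc
        exact hlenw col hcol
      · obtain ⟨col, hcol, rfl⟩ := List.mem_map.1 hc
        rw [hlenz col hcol, hστ]
    intro c hc c' hc'
    rw [key c hc, key c' hc']
  · -- gluing
    intro j hj
    simp only [List.get_eq_getElem]
    simp only [List.length_append, List.length_map] at hj
    rcases Nat.lt_or_ge (j+1) τw.length with hjw | hjw
    · have e1 : (τw.map (selL σ) ++ τz.map (selL τ))[j] = selL σ τw[j] := by
        rw [List.getElem_append_left (by simp; omega), List.getElem_map]
      have e2 : (τw.map (selL σ) ++ τz.map (selL τ))[j+1] = selL σ τw[j+1] := by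
        rw [List.getElem_append_left (by simpa using hjw), List.getElem_map]
      rw [e1, e2, outgoing_selL, incoming_selL]
      have := hw4 j hjw
      simp only [List.get_eq_getElem] at this
      rw [this]
    · rcases Nat.eq_or_lt_of_le hjw with hje | hjw'
      · -- junction
        have hjv : j = τw.length - 1 := by omega
        have e1 : (τw.map (selL σ) ++ τz.map (selL τ))[j] = selL σ τw[j] := by
          rw [List.getElem_append_left (by simp; omega), List.getElem_map]
        have e2 : (τw.map (selL σ) ++ τz.map (selL τ))[j+1] = selL τ (τz[0]'hzpos) := by
          rw [List.getElem_append_right (by simp; omega), List.getElem_map]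
          exact congrArg (selL τ) (getElem_congr_idx' τz (by simp only [List.length_map]; omega) _)
        have hAeq' : outgoing (τw[j]'(by omega)) = A := by
          rw [hAeq]
          exact congrArg outgoing (getElem_congr_idx' τw (by omega) _)
        rw [e1, e2, outgoing_selL, incoming_selL, hAeq', ← hBeq, hsel]
      · -- z part
        have e1 : (τw.map (selL σ) ++ τz.map (selL τ))[j] = selL τ τz[j - τw.length] := by
          rw [List.getElem_append_right (by simp; omega)]
          simp
        have hlt : (j - τw.length) + 1 < τz.length := by omega
        have e2 : (τw.map (selL σ) ++ τz.map (selL τ))[j+1] =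
            selL τ (τz[(j - τw.length) + 1]'hlt) := by
          rw [List.getElem_append_right (by simp; omega), List.getElem_map]
          exact congrArg (selL τ) (getElem_congr_idx' τz (by simp only [List.length_map]; omega) _)
        rw [e1, e2, outgoing_selL, incoming_selL]
        have := hz4 (j - τw.length) hlt
        simp only [List.get_eq_getElem] at this
        rw [this]
  · -- used letters w part
    intro j h₁ h₂
    simp only [List.get_eq_getElem]
    have e1 : (τw.map (selL σ) ++ τz.map (selL τ))[j] = selL σ τw[j] := by
      rw [List.getElem_append_left (by simpa using h₁), List.getElem_map]
    rw [e1]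
    exact usedLetters_selL (hgw _ (List.getElem_mem _))
  · -- used letters z part
    intro j h₁ h₂
    simp only [List.get_eq_getElem]
    have e1 : (τw.map (selL σ) ++ τz.map (selL τ))[τw.length + j] = selL τ (τz[j]'h₁) := by
      rw [List.getElem_append_right (by simp), List.getElem_map]
      exact congrArg (selL τ) (getElem_congr_idx' τz (by simp only [List.length_map]; omega) _)
    rw [e1]
    exact usedLetters_selL (hgz _ (List.getElem_mem _))
  · -- fIncoming
    have hne : (τw.map (selL σ) ++ τz.map (selL τ)).length > 0 := by simp; omega
    unfold fIncoming
    rw [headD_nil_eq _ hne, headD_nil_eq _ hwpos,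
      List.getElem_append_left (by simpa using hwpos), List.getElem_map,
      incoming_selL]
    exact fa_selL hσ _ (by
      have := hcolw τw[0] (List.getElem_mem _)
      simpa [incoming] using this)
  · -- fOutgoing
    have hnez : τz ≠ [] := List.ne_nil_of_length_pos hzpos
    have hlast : τz.getLast? = some (τz.getLast hnez) := List.getLast?_eq_getLast _
    unfold fOutgoing
    rw [List.getLast?_append, List.getLast?_map, hlast]
    simp only [Option.map_some, Option.some_or, Option.getD_some]
    rw [outgoing_selL]
    exact fa_selL hτ _ (by
      have := hcolz (τz.getLast hnez) (List.getLast_mem hnez)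
      simpa [outgoing] using this)

end Main

/-- Lemma `lem:fragment`: fragment separation refinements can be
concatenated. If `τ_w` and `τ_z` are fragment separation refinements for `w` and
`z` whose first-appearance lists of outgoing (resp. incoming) states coincide,
then there is a fragment separation refinement `τ_{wz}` for `w ++ z` with the
same sets of used source letters at corresponding positions, the same
first-appearance list of incoming states as `τ_w`, and the same first-appearance
list of outgoing states as `τ_z`. -/
theorem fsr_concat
    {Sig QI QT : Type} [Fintype Sig] [Fintype QI] [Fintype QT] [DecidableEq QT]
    (R : RTS Sig QI QT) (w z : List Sig)
    (τw τz : List (Column Sig QT))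
    (hw : IsFSR R w τw) (hz : IsFSR R z τz)
    (h : firstAppear (fOutgoing τw) = firstAppear (fIncoming τz)) :
    ∃ τwz : List (Column Sig QT),
      IsFSR R (w ++ z) τwz ∧
      (∀ (j : ℕ) (h₁ : j < τw.length) (h₂ : j < τwz.length),
        usedLetters (τwz.get ⟨j, h₂⟩) = usedLetters (τw.get ⟨j, h₁⟩)) ∧
      (∀ (j : ℕ) (h₁ : j < τz.length) (h₂ : τw.length + j < τwz.length),
        usedLetters (τwz.get ⟨τw.length + j, h₂⟩) = usedLetters (τz.get ⟨j, h₁⟩)) ∧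
      firstAppear (fIncoming τwz) = firstAppear (fIncoming τw) ∧
      firstAppear (fOutgoing τwz) = firstAppear (fOutgoing τz) :=
  fsr_concat' R w z τw τz hw hz h
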